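/- Let n ≥ 2 and 1 ≤ s ≤ n−1, let S ⊆ {1,…,n} with |S| = n−s and elements g_1 < ⋯ < g_{n−s}, set γ_j = ρ_{g_j}^{(n)} for j = 1,…,n−s, and let G be the (n−s)×(n−s) real matrix with (i,j) entry T_{i−1}(γ_j). Then G is invertible and ‖G⁻¹‖_F² ≤ (2/n) · Σ_{k=1}^{n−s} Σ_{i=1}^{n} L_k(ρ_i^{(n)})², where L_k is the k-th Lagrange basis polynomial associated with γ_1,…,γ_{n−s}. -/

import Mathlib

open Polynomial

/-- The `i`-th Chebyshev point of degree `n`: `ρ_i^{(n)} = cos((2i-1)π/(2n))`. -/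
noncomputable def chebPt (n i : ℕ) : ℝ :=
  Real.cos ((2 * (i : ℝ) - 1) * Real.pi / (2 * (n : ℝ)))

/-- The `k`-th Lagrange basis function associated with nodes `γ`. -/
noncomputable def lagrangeBasis {r : ℕ} (γ : Fin r → ℝ) (k : Fin r) (x : ℝ) : ℝ :=
  ∏ j ∈ Finset.univ.erase k, (x - γ j) / (γ k - γ j)

open Real

lemma T_deg_le : ∀ m : ℕ, (Chebyshev.T ℝ (m : ℤ)).degree ≤ (m : ℕ)
  | 0 => by simp [Chebyshev.T_zero]
  | 1 => by simp [Chebyshev.T_one, degree_X_le]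
  | (m+2) => by
    have h1 := T_deg_le m
    have h2 := T_deg_le (m+1)
    rw [show ((m+2:ℕ) : ℤ) = (m : ℤ) + 2 by push_cast; ring, Chebyshev.T_add_two]
    refine le_trans (degree_sub_le _ _) ?_
    simp only [max_le_iff]
    constructor
    · refine le_trans (degree_mul_le _ _) ?_
      rw [show ((m:ℤ)+1) = ((m+1 : ℕ) : ℤ) by push_cast; ring]
      refine le_trans (add_le_add (degree_mul_le _ _) h2) ?_
      refine le_trans (add_le_add (add_le_add (le_trans (le_of_eq (congrArg _ (map_ofNat C 2).symm)) degree_C_le) degree_X_le) le_rfl) ?_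
      rw [show ((m+2:ℕ) : WithBot ℕ) = 0 + 1 + ((m+1:ℕ) : WithBot ℕ) by push_cast; ring]
    · exact le_trans h1 (by exact_mod_cast WithBot.coe_le_coe.2 (by omega))

lemma T_coeff_top : ∀ m : ℕ, (Chebyshev.T ℝ (m : ℤ)).coeff m = if m = 0 then 1 else 2^(m-1)
  | 0 => by simp [Chebyshev.T_zero]
  | 1 => by simp [Chebyshev.T_one]
  | (m+2) => by
    have h2 := T_coeff_top (m+1)
    rw [show ((m+2:ℕ) : ℤ) = (m : ℤ) + 2 by push_cast; ring, Chebyshev.T_add_two]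
    have hd : (Chebyshev.T ℝ (m:ℤ)).coeff (m+2) = 0 := by
      apply coeff_eq_zero_of_degree_lt
      exact lt_of_le_of_lt (T_deg_le m) (by exact_mod_cast WithBot.coe_lt_coe.2 (by omega))
    rw [show ((m:ℤ)+1) = ((m+1 : ℕ) : ℤ) by push_cast; ring]
    rw [coeff_sub, hd, sub_zero, mul_assoc, show (2 : ℝ[X]) = C 2 from (map_ofNat C 2).symm,
      coeff_C_mul, show m+2 = (m+1)+1 from rfl, coeff_X_mul, h2]
    simp only [Nat.add_eq_zero, and_false, if_false, Nat.succ_sub_one]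
    by_cases hm : m = 0 <;> simp [hm]
    · rw [pow_succ]; ring

lemma cheb_indep {r : ℕ} (v : Fin r → ℝ)
    (h : ∑ i : Fin r, C (v i) * Chebyshev.T ℝ ((i:ℕ) : ℤ) = 0) : v = 0 := by
  by_contra hv
  have hne : (Finset.univ.filter (fun i => v i ≠ 0)).Nonempty := by
    rw [Finset.filter_nonempty_iff]
    simpa [funext_iff] using hv
  set m := (Finset.univ.filter (fun i => v i ≠ 0)).max' hne with hm
  have hmmem := (Finset.univ.filter (fun i => v i ≠ 0)).max'_mem hne
  have hvm : v m ≠ 0 := (Finset.mem_filter.1 hmmem).2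
  have hc := congrArg (fun p => Polynomial.coeff p (m : ℕ)) h
  simp only [finset_sum_coeff, coeff_C_mul, coeff_zero] at hc
  rw [Finset.sum_eq_single m] at hc
  · rw [T_coeff_top] at hc
    rcases eq_or_ne ((m:Fin r):ℕ) 0 with h0 | h0 <;> simp [h0] at hc <;> exact hvm hc
  · intro b _ hb
    rcases lt_or_gt_of_ne (fun he => hb (Fin.ext he) : (b:ℕ) ≠ (m:ℕ)) with hlt | hgt
    · rw [coeff_eq_zero_of_degree_lt (lt_of_le_of_lt (T_deg_le b) (by exact_mod_cast hlt)), mul_zero]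
    · have : v b = 0 := by
        by_contra hvb
        have : b ≤ m := Finset.le_max' _ b (by simp [hvb])
        omega
      rw [this, zero_mul]
  · simp

lemma cos_sum_zero (n m : ℕ) (hn : 0 < n) (hm : 0 < m) (hm2 : m < 2*n) :
    ∑ i ∈ Finset.Icc 1 n, Real.cos ((m:ℝ) * ((2*(i:ℝ)-1) * π / (2*(n:ℝ)))) = 0 := by
  set α : ℝ := π / (2*(n:ℝ)) with hα
  have hsin : Real.sin ((m:ℝ) * α) ≠ 0 := by
    apply ne_of_gt
    apply Real.sin_pos_of_pos_of_lt_pi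
    · positivity
    · rw [hα]
      calc (m:ℝ) * (π / (2*(n:ℝ))) < (2*(n:ℝ)) * (π / (2*(n:ℝ))) := by
              apply mul_lt_mul_of_pos_right
              · exact_mod_cast hm2
              · positivity
        _ = π := by field_simp
  have key : ∀ i : ℕ, Real.sin ((m:ℝ)*(2*((i:ℝ)+1))*α) - Real.sin ((m:ℝ)*(2*(i:ℝ))*α)
      = 2 * Real.sin ((m:ℝ)*α) * Real.cos ((m:ℝ) * ((2*((i:ℝ)+1)-1) * α)) := by
    intro i
    rw [Real.sin_sub_sin]
    ring_nf
  have htel : ∑ j ∈ Finset.range n, (Real.sin ((m:ℝ)*(2*((j:ℝ)+1))*α) - Real.sin ((m:ℝ)*(2*(j:ℝ))*α))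
      = Real.sin ((m:ℝ)*(2*(n:ℝ))*α) - Real.sin ((m:ℝ)*(2*(0:ℝ))*α) := by
    have := Finset.sum_range_sub (fun j : ℕ => Real.sin ((m:ℝ)*(2*(j:ℝ))*α)) n
    simpa using this
  have hend : Real.sin ((m:ℝ)*(2*(n:ℝ))*α) = 0 := by
    rw [hα, show (m:ℝ)*(2*(n:ℝ))*(π/(2*(n:ℝ))) = (m:ℝ)*π by field_simp]
    exact Real.sin_nat_mul_pi m
  have hsum0 : ∑ j ∈ Finset.range n, Real.cos ((m:ℝ) * ((2*((j:ℝ)+1)-1) * α)) = 0 := by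
    have h2 : ∑ j ∈ Finset.range n, (2 * Real.sin ((m:ℝ)*α) * Real.cos ((m:ℝ) * ((2*((j:ℝ)+1)-1) * α))) = 0 := by
      rw [← Finset.sum_congr rfl (fun j _ => key j), htel, hend]
      simp
    rw [← Finset.mul_sum] at h2
    have h2' := mul_eq_zero.1 h2
    rcases h2' with h | h
    · exact absurd h (by simp [hsin])
    · exact h
  rw [← Finset.Ico_add_one_right_eq_Icc, Finset.sum_Ico_eq_sum_range]
  rw [← hsum0]
  apply Finset.sum_congr rfl
  intro j _
  congr 1
  push_cast
  rw [hα]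
  ring

lemma cheb_orth (n : ℕ) (hn : 0 < n) (a b : ℕ) (ha : a < n) (hb : b < n) :
    ∑ i ∈ Finset.Icc 1 n,
        ((Chebyshev.T ℝ (a:ℤ)).eval (chebPt n i) * (Chebyshev.T ℝ (b:ℤ)).eval (chebPt n i))
      = if a = b then (if a = 0 then (n:ℝ) else (n:ℝ)/2) else 0 := by
  wlog hab : b ≤ a generalizing a b
  · rw [show (∑ i ∈ Finset.Icc 1 n, (Chebyshev.T ℝ (a:ℤ)).eval (chebPt n i) * (Chebyshev.T ℝ (b:ℤ)).eval (chebPt n i))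
        = ∑ i ∈ Finset.Icc 1 n, (Chebyshev.T ℝ (b:ℤ)).eval (chebPt n i) * (Chebyshev.T ℝ (a:ℤ)).eval (chebPt n i)
        from Finset.sum_congr rfl (fun i _ => mul_comm _ _)]
    rw [this b a hb ha (by omega)]
    rcases eq_or_ne b a with h | h
    · subst h; simp
    · simp [h, Ne.symm h]
  have hterm : ∀ i : ℕ, (Chebyshev.T ℝ (a:ℤ)).eval (chebPt n i) * (Chebyshev.T ℝ (b:ℤ)).eval (chebPt n i)
      = Real.cos ((a:ℝ) * ((2*(i:ℝ)-1) * π / (2*(n:ℝ)))) * Real.cos ((b:ℝ) * ((2*(i:ℝ)-1) * π / (2*(n:ℝ)))) := by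
    intro i
    unfold chebPt
    rw [Chebyshev.T_real_cos, Chebyshev.T_real_cos]
    norm_num
  rw [Finset.sum_congr rfl (fun i _ => hterm i)]
  rcases eq_or_ne a b with hab' | hab'
  · subst hab'
    rcases eq_or_ne a 0 with h0 | h0
    · subst h0; simp [Nat.card_Icc]
    · simp only [if_pos rfl, if_neg h0]
      have : ∀ i : ℕ, Real.cos ((a:ℝ) * ((2*(i:ℝ)-1) * π / (2*(n:ℝ)))) * Real.cos ((a:ℝ) * ((2*(i:ℝ)-1) * π / (2*(n:ℝ))))
          = 1/2 + (1/2) * Real.cos (((2*a : ℕ):ℝ) * ((2*(i:ℝ)-1) * π / (2*(n:ℝ)))) := by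
        intro i
        rw [← sq, Real.cos_sq]
        push_cast; ring_nf
      rw [Finset.sum_congr rfl (fun i _ => this i), Finset.sum_add_distrib, ← Finset.mul_sum,
        cos_sum_zero n (2*a) hn (by omega) (by omega)]
      simp [Nat.card_Icc]
      ring
  · have hlt : b < a := lt_of_le_of_ne hab (Ne.symm hab')
    simp only [if_neg hab']
    have : ∀ i : ℕ, Real.cos ((a:ℝ) * ((2*(i:ℝ)-1) * π / (2*(n:ℝ)))) * Real.cos ((b:ℝ) * ((2*(i:ℝ)-1) * π / (2*(n:ℝ))))
        = (1/2) * Real.cos (((a+b : ℕ):ℝ) * ((2*(i:ℝ)-1) * π / (2*(n:ℝ))))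
          + (1/2) * Real.cos (((a-b : ℕ):ℝ) * ((2*(i:ℝ)-1) * π / (2*(n:ℝ)))) := by
      intro i
      set θ := (2*(i:ℝ)-1) * π / (2*(n:ℝ))
      have hc1 := Real.cos_add ((a:ℝ)*θ) ((b:ℝ)*θ)
      have hc2 := Real.cos_sub ((a:ℝ)*θ) ((b:ℝ)*θ)
      have e1 : ((a+b:ℕ):ℝ)*θ = (a:ℝ)*θ + (b:ℝ)*θ := by push_cast; ring
      have e2 : ((a-b:ℕ):ℝ)*θ = (a:ℝ)*θ - (b:ℝ)*θ := by
        have : ((a-b:ℕ):ℝ) = (a:ℝ) - (b:ℝ) := by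
          push_cast [Nat.cast_sub hab]; ring
        rw [this]; ring
      rw [e1, e2, hc1, hc2]
      ring
    rw [Finset.sum_congr rfl (fun i _ => this i), Finset.sum_add_distrib, ← Finset.mul_sum,
      ← Finset.mul_sum, cos_sum_zero n (a+b) hn (by omega) (by omega),
      cos_sum_zero n (a-b) hn (by omega) (by omega)]
    simp

/-- For `n ≥ 2`, `1 ≤ s ≤ n-1`, and a subset of `{1,…,n}` of size `n - s` enumerated by a
strictly increasing `g`, setting `γ_j = ρ_{g j}^{(n)}`, the Chebyshev-Vandermonde matrix `G`
with entries `T_{i-1}(γ_j)` is invertible and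
`‖G⁻¹‖_F² ≤ (2/n) ∑_{k} ∑_{i=1}^n L_k(ρ_i^{(n)})²`. -/
theorem stmt_2 (n s : ℕ) (hn : 2 ≤ n) (hs1 : 1 ≤ s) (hs2 : s ≤ n - 1)
    (g : Fin (n - s) → ℕ) (hg : StrictMono g) (hgmem : ∀ j, g j ∈ Finset.Icc 1 n)
    (γ : Fin (n - s) → ℝ) (hγ : ∀ j, γ j = chebPt n (g j))
    (G : Matrix (Fin (n - s)) (Fin (n - s)) ℝ)
    (hG : ∀ i j, G i j = (Polynomial.Chebyshev.T ℝ (i : ℕ)).eval (γ j)) :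
    IsUnit G.det ∧
      (∑ i, ∑ j, (G⁻¹ i j) ^ 2) ≤
        (2 / (n : ℝ)) *
          ∑ k : Fin (n - s), ∑ i ∈ Finset.Icc 1 n, (lagrangeBasis γ k (chebPt n i)) ^ 2 := by
  have hr1 : 1 ≤ n - s := by omega
  have hrn : n - s ≤ n - 1 := by omega
  have hnpos : (0:ℝ) < n := by positivity
  have hang : ∀ j : Fin (n - s), (2*((g j : ℕ):ℝ)-1)*π/(2*(n:ℝ)) ∈ Set.Icc 0 π := by
    intro j
    have h1 : 1 ≤ g j := (Finset.mem_Icc.1 (hgmem j)).1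
    have h2 : g j ≤ n := (Finset.mem_Icc.1 (hgmem j)).2
    constructor
    · apply div_nonneg _ (by positivity)
      have : (1:ℝ) ≤ (g j : ℝ) := by exact_mod_cast h1
      nlinarith [Real.pi_pos]
    · rw [div_le_iff₀ (by positivity)]
      have : ((g j : ℕ):ℝ) ≤ (n:ℝ) := by exact_mod_cast h2
      nlinarith [Real.pi_pos]
  have hganti : StrictAnti γ := by
    intro j j' hjj'
    rw [hγ, hγ]
    unfold chebPt
    apply Real.strictAntiOn_cos (hang j) (hang j')
    have hgg : g j < g j' := hg hjj'
    have : ((g j : ℕ):ℝ) < ((g j' : ℕ):ℝ) := by exact_mod_cast hgg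
    apply div_lt_div_of_pos_right ?_ (by positivity)
    nlinarith [Real.pi_pos]
  have hginj : Function.Injective γ := hganti.injective
  -- degree bound for the interpolation polynomials
  have hdegsum : ∀ v : Fin (n-s) → ℝ,
      (∑ i : Fin (n-s), C (v i) * Chebyshev.T ℝ ((i:ℕ) : ℤ)).natDegree < n - s := by
    intro v
    have : (∑ i : Fin (n-s), C (v i) * Chebyshev.T ℝ ((i:ℕ) : ℤ)).natDegree ≤ n - s - 1 := by
      apply Polynomial.natDegree_sum_le_of_forall_le
      intro i _
      apply le_trans (natDegree_mul_le)
      rw [natDegree_C]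
      have : (Chebyshev.T ℝ ((i:ℕ):ℤ)).natDegree ≤ (i:ℕ) :=
        natDegree_le_iff_degree_le.2 (T_deg_le (i:ℕ))
      omega
    omega
  -- determinant is nonzero
  have hdet : IsUnit G.det := by
    rw [isUnit_iff_ne_zero, ← Matrix.det_transpose]
    intro hd
    obtain ⟨v, hv, hv0⟩ := Matrix.exists_mulVec_eq_zero_iff.mpr hd
    apply hv
    have hpz : (∑ i : Fin (n-s), C (v i) * Chebyshev.T ℝ ((i:ℕ) : ℤ)) = 0 := by
      apply Polynomial.eq_zero_of_natDegree_lt_card_of_eval_eq_zero _ hginj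
      · intro j
        have := congrFun hv0 j
        simp only [Matrix.mulVec, Matrix.transpose_apply, dotProduct, Pi.zero_apply] at this
        rw [eval_finset_sum]
        simp only [eval_mul, eval_C]
        rw [← this]
        apply Finset.sum_congr rfl
        intro i _
        rw [hG i j]
        ring
      · rw [Fintype.card_fin]
        exact hdegsum v
    exact cheb_indep v hpz
  refine ⟨hdet, ?_⟩
  have hGinvG : G⁻¹ * G = 1 := Matrix.nonsing_inv_mul G hdet
  -- the Lagrange basis equals the Chebyshev expansion with coefficients G⁻¹ k ·
  have hkey : ∀ (k : Fin (n-s)) (x : ℝ),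
      lagrangeBasis γ k x = ∑ a : Fin (n-s), G⁻¹ k a * (Chebyshev.T ℝ ((a:ℕ):ℤ)).eval x := by
    intro k x
    set p : ℝ[X] := ∑ a : Fin (n-s), C (G⁻¹ k a) * Chebyshev.T ℝ ((a:ℕ) : ℤ) with hp
    set q : ℝ[X] := ∏ j ∈ Finset.univ.erase k, (C ((γ k - γ j)⁻¹) * (X - C (γ j))) with hq
    have hqeval : ∀ y : ℝ, q.eval y = lagrangeBasis γ k y := by
      intro y
      rw [hq, eval_prod]
      unfold lagrangeBasis
      apply Finset.prod_congr rfl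
      intro j _
      simp [div_eq_inv_mul]
    have hpeval : ∀ j, p.eval (γ j) = if k = j then 1 else 0 := by
      intro j
      rw [hp, eval_finset_sum]
      have := congrFun (congrFun hGinvG k) j
      simp only [Matrix.mul_apply, Matrix.one_apply] at this
      rw [← this]
      apply Finset.sum_congr rfl
      intro a _
      rw [hG a j]
      simp [mul_comm]
    have hqevalγ : ∀ j, q.eval (γ j) = if k = j then 1 else 0 := by
      intro j
      rw [hq, eval_prod]
      rcases eq_or_ne k j with hkj | hkj
      · subst hkj
        rw [if_pos rfl]
        apply Finset.prod_eq_one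
        intro i hi
        have hne : γ k - γ i ≠ 0 := by
          have : k ≠ i := fun h => (Finset.mem_erase.1 hi).1 (h.symm)
          exact sub_ne_zero.2 fun h => this (hginj h)
        simp [inv_mul_cancel₀ hne]
      · rw [if_neg hkj]
        apply Finset.prod_eq_zero (Finset.mem_erase.2 ⟨fun h => hkj h.symm, Finset.mem_univ j⟩)
        simp
    have hqdeg : q.natDegree ≤ n - s - 1 := by
      rw [hq]
      apply le_trans (Polynomial.natDegree_prod_le _ _)
      apply le_trans (Finset.sum_le_card_nsmul _ _ 1 ?_)
      · simp [Finset.card_erase_of_mem]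
      · intro i _
        apply le_trans natDegree_mul_le
        simp [natDegree_X_sub_C]
    have hpq : p = q := by
      have hz : p - q = 0 := by
        apply Polynomial.eq_zero_of_natDegree_lt_card_of_eval_eq_zero _ hginj
        · intro j
          rw [eval_sub, hpeval j, hqevalγ j, sub_self]
        · rw [Fintype.card_fin]
          apply lt_of_le_of_lt (natDegree_sub_le _ _)
          apply max_lt
          · exact hdegsum _
          · omega
      exact sub_eq_zero.1 hz
    rw [← hqeval x, ← hpq, hp, eval_finset_sum]
    apply Finset.sum_congr rfl
    intro a _
    simp
  have hLsum : ∀ k : Fin (n-s), ∑ i ∈ Finset.Icc 1 n, (lagrangeBasis γ k (chebPt n i))^2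
      = ∑ a : Fin (n-s), (G⁻¹ k a)^2 * (if (a:ℕ) = 0 then (n:ℝ) else (n:ℝ)/2) := by
    intro k
    have step1 : ∀ i ∈ Finset.Icc 1 n, (lagrangeBasis γ k (chebPt n i))^2
        = ∑ a : Fin (n-s), ∑ b : Fin (n-s),
            (G⁻¹ k a * G⁻¹ k b) * ((Chebyshev.T ℝ ((a:ℕ):ℤ)).eval (chebPt n i) * (Chebyshev.T ℝ ((b:ℕ):ℤ)).eval (chebPt n i)) := by
      intro i _
      rw [hkey k, sq, Finset.sum_mul_sum]
      apply Finset.sum_congr rfl; intro a _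
      apply Finset.sum_congr rfl; intro b _
      ring
    rw [Finset.sum_congr rfl step1, Finset.sum_comm]
    apply Finset.sum_congr rfl
    intro a _
    rw [Finset.sum_comm]
    have step2 : ∀ b ∈ (Finset.univ : Finset (Fin (n-s))),
        ∑ i ∈ Finset.Icc 1 n, (G⁻¹ k a * G⁻¹ k b) * ((Chebyshev.T ℝ ((a:ℕ):ℤ)).eval (chebPt n i) * (Chebyshev.T ℝ ((b:ℕ):ℤ)).eval (chebPt n i))
        = (G⁻¹ k a * G⁻¹ k b) * (if (a:ℕ) = (b:ℕ) then (if (a:ℕ) = 0 then (n:ℝ) else (n:ℝ)/2) else 0) := by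
      intro b _
      rw [← Finset.mul_sum, cheb_orth n (by omega) a b (by omega) (by omega)]
    rw [Finset.sum_congr rfl step2, Finset.sum_eq_single a]
    · simp [sq]
    · intro b _ hb
      rw [if_neg (fun h => hb (Fin.ext h.symm)), mul_zero]
    · simp
  calc (∑ i, ∑ j, (G⁻¹ i j) ^ 2)
      ≤ ∑ k : Fin (n-s), (2/(n:ℝ)) * ∑ a : Fin (n-s), (G⁻¹ k a)^2 * (if (a:ℕ) = 0 then (n:ℝ) else (n:ℝ)/2) := by
        apply Finset.sum_le_sum
        intro k _
        rw [Finset.mul_sum]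
        apply Finset.sum_le_sum
        intro a _
        rcases eq_or_ne (a:ℕ) 0 with h0 | h0
        · rw [if_pos h0]
          have : (2/(n:ℝ)) * ((G⁻¹ k a)^2 * n) = 2 * (G⁻¹ k a)^2 := by
            field_simp
          rw [this]
          nlinarith [sq_nonneg (G⁻¹ k a)]
        · rw [if_neg h0]
          have : (2/(n:ℝ)) * ((G⁻¹ k a)^2 * ((n:ℝ)/2)) = (G⁻¹ k a)^2 := by
            field_simp
          rw [this]
    _ = (2 / (n : ℝ)) * ∑ k : Fin (n - s), ∑ i ∈ Finset.Icc 1 n, (lagrangeBasis γ k (chebPt n i)) ^ 2 := by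
        rw [Finset.mul_sum]
        apply Finset.sum_congr rfl
        intro k _
        rw [hLsum k]
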